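/- Let J be a countable index set, (c_j)_{j∈J} complex numbers with ∑_j |c_j| < ∞, and for each j a point π_j in a compact Hausdorff space R, with π_{j₁} ≠ π_{j₂} for j₁ ≠ j₂. Suppose 𝒜 is a subalgebra of C(R, ℂ) containing the constants, closed under complex conjugation, and separating points (hence dense by Stone–Weierstrass), and suppose ∑_j c_j F(π_j) = 0 for all F ∈ 𝒜. Then c_j = 0 for all j. -/

import Mathlib

open scoped ContinuousMap

/-- Flath's abstract spectral simplification lemma: an absolutely summable family of complex
coefficients attached to distinct points of a compact Hausdorff space, annihilated by
evaluation against every member of a unital, conjugation-stable, point-separating subalgebra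
of continuous functions, must vanish identically. -/
theorem stmt_13 {R : Type*} [TopologicalSpace R] [CompactSpace R] [T2Space R]
    {J : Type*} [Countable J] (c : J → ℂ)
    (hsum : Summable fun j => ‖c j‖)
    (π : J → R) (hinj : Function.Injective π)
    (A : Subalgebra ℂ C(R, ℂ))
    (hconj : ∀ f ∈ A, star f ∈ A)
    (hsep : ∀ x y : R, x ≠ y → ∃ f ∈ A, f x ≠ f y)
    (hzero : ∀ f ∈ A, ∑' j, c j * f (π j) = 0) :
    ∀ j, c j = 0 := by
  set C : ℝ := ∑' j, ‖c j‖ with hC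
  have hC0 : 0 ≤ C := tsum_nonneg fun j => norm_nonneg _
  -- summability of the evaluated series
  have hsummable : ∀ h : C(R, ℂ), Summable fun j => c j * h (π j) := by
    intro h
    apply Summable.of_norm
    apply Summable.of_nonneg_of_le (fun j => norm_nonneg _) _ (hsum.mul_right ‖h‖)
    intro j
    rw [norm_mul]
    exact mul_le_mul_of_nonneg_left (h.norm_coe_le_norm (π j)) (norm_nonneg _)
  -- the key norm bound
  have hbound : ∀ h : C(R, ℂ), ‖∑' j, c j * h (π j)‖ ≤ C * ‖h‖ := by
    intro h
    refine (norm_tsum_le_tsum_norm ((hsummable h).norm)).trans ?_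
    rw [← tsum_mul_right]
    refine Summable.tsum_le_tsum (fun j => ?_) (hsummable h).norm (hsum.mul_right ‖h‖)
    rw [norm_mul]
    exact mul_le_mul_of_nonneg_left (h.norm_coe_le_norm (π j)) (norm_nonneg _)
  -- Stone–Weierstrass: A is dense
  let A' : StarSubalgebra ℂ C(R, ℂ) :=
    { toSubalgebra := A, star_mem' := fun hf => hconj _ hf }
  have hdense : A'.topologicalClosure = ⊤ :=
    ContinuousMap.starSubalgebra_topologicalClosure_eq_top_of_separatesPoints A'
      (fun x y hxy => by
        obtain ⟨f, hfA, hf⟩ := hsep x y hxy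
        exact ⟨_, ⟨f, hfA, rfl⟩, hf⟩)
  -- the functional vanishes on all continuous functions
  have hphi : ∀ f : C(R, ℂ), ∑' j, c j * f (π j) = 0 := by
    intro f
    have hmem : f ∈ closure (A : Set C(R, ℂ)) := by
      have : f ∈ A'.topologicalClosure := hdense ▸ trivial
      exact this
    have key : ∀ ε : ℝ, 0 < ε → ‖∑' j, c j * f (π j)‖ < ε := by
      intro ε hε
      have hε' : 0 < ε / (C + 1) := by positivity
      obtain ⟨g, hgA, hg⟩ := Metric.mem_closure_iff.1 hmem _ hε'
      have h1 : (∑' j, c j * f (π j)) = ∑' j, c j * (f - g) (π j) := by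
        have := hzero g hgA
        rw [← sub_zero (∑' j, c j * f (π j)), ← this,
          ← Summable.tsum_sub (hsummable f) (hsummable g)]
        congr 1
        ext j
        simp [mul_sub]
      rw [h1]
      calc ‖∑' j, c j * (f - g) (π j)‖ ≤ C * ‖f - g‖ := hbound _
        _ < ε := by
            have hfg : ‖f - g‖ < ε / (C + 1) := by rwa [← dist_eq_norm]
            calc C * ‖f - g‖ ≤ (C + 1) * ‖f - g‖ := by nlinarith [norm_nonneg (f - g)]
              _ < (C + 1) * (ε / (C + 1)) := by
                  exact mul_lt_mul_of_pos_left hfg (by linarith)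
              _ = ε := by field_simp
    by_contra hne
    have hpos : 0 < ‖∑' j, c j * f (π j)‖ := norm_pos_iff.2 hne
    exact absurd (key _ hpos) (lt_irrefl _)
  -- now the main argument
  classical
  intro j₀
  have habs : ∀ ε : ℝ, 0 < ε → ‖c j₀‖ ≤ ε := by
    intro ε hε
    -- find a finite set with small tail
    have htend := hsum.hasSum
    obtain ⟨s, hs⟩ : ∃ s : Finset J, C - ε < ∑ j ∈ s, ‖c j‖ := by
      have := (tendsto_order.1 htend).1 (C - ε) (by linarith)
      exact this.exists
    set s' : Finset J := insert j₀ s with hs'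
    have htail : ∑' j : ↑(↑s' : Set J)ᶜ, ‖c j‖ < ε := by
      have heq := Summable.sum_add_tsum_compl (s := s') hsum
      have hmono : ∑ j ∈ s, ‖c j‖ ≤ ∑ j ∈ s', ‖c j‖ :=
        Finset.sum_le_sum_of_subset_of_nonneg (Finset.subset_insert _ _)
          (fun _ _ _ => norm_nonneg _)
      have : ∑' j : ↑(↑s' : Set J)ᶜ, ‖c j‖ = C - ∑ j ∈ s', ‖c j‖ := by
        rw [hC]; linarith [heq]
      rw [this]; linarith
    -- Urysohn bump function
    have hclosed1 : IsClosed (π '' ((s' : Set J) \ {j₀})) :=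
      (Set.Finite.image π ((s'.finite_toSet).diff)).isClosed
    have hclosed2 : IsClosed ({π j₀} : Set R) := isClosed_singleton
    have hdisj : Disjoint (π '' ((s' : Set J) \ {j₀})) ({π j₀} : Set R) := by
      rw [Set.disjoint_singleton_right]
      rintro ⟨j, ⟨_, hj⟩, hjeq⟩
      exact hj (hinj hjeq)
    obtain ⟨g, hg0, hg1, hg01⟩ :=
      exists_continuous_zero_one_of_isClosed hclosed1 hclosed2 hdisj
    let f : C(R, ℂ) := ⟨fun x => (g x : ℂ), by continuity⟩
    have hf1 : f (π j₀) = 1 := by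
      simp only [f, ContinuousMap.coe_mk]
      rw [hg1 rfl]; simp
    have hf0 : ∀ j ∈ s', j ≠ j₀ → f (π j) = 0 := by
      intro j hj hjne
      simp only [f, ContinuousMap.coe_mk]
      rw [hg0 ⟨j, ⟨hj, hjne⟩, rfl⟩]; simp
    have hfb : ∀ x, ‖f x‖ ≤ 1 := by
      intro x
      simp only [f, ContinuousMap.coe_mk, Complex.norm_real, Real.norm_eq_abs]
      exact abs_le.2 ⟨by linarith [(hg01 x).1], (hg01 x).2⟩
    -- split the sum
    have hsplit := Summable.sum_add_tsum_compl (s := s') (hsummable f)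
    have hsum0 : ∑ j ∈ s', c j * f (π j) = c j₀ := by
      rw [Finset.sum_eq_single j₀]
      · rw [hf1, mul_one]
      · intro j hj hjne
        rw [hf0 j hj hjne, mul_zero]
      · intro h; exact absurd (Finset.mem_insert_self j₀ s) h
    have hzero' := hphi f
    have htaileq : c j₀ = -∑' j : ↑(↑s' : Set J)ᶜ, c j * f (π j) := by
      rw [← hsum0]; linear_combination hsplit + hzero'
    rw [htaileq, norm_neg]
    calc ‖∑' j : ↑(↑s' : Set J)ᶜ, c j * f (π j)‖
        ≤ ∑' j : ↑(↑s' : Set J)ᶜ, ‖c j * f (π j)‖ :=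
          norm_tsum_le_tsum_norm (((hsummable f).subtype _).norm)
      _ ≤ ∑' j : ↑(↑s' : Set J)ᶜ, ‖c j‖ := by
          refine Summable.tsum_le_tsum (fun j => ?_) (((hsummable f).subtype _).norm)
            (hsum.subtype _)
          rw [norm_mul]
          calc ‖c j.1‖ * ‖f (π j.1)‖ ≤ ‖c j.1‖ * 1 :=
                mul_le_mul_of_nonneg_left (hfb _) (norm_nonneg _)
            _ = ‖c j.1‖ := by rw [mul_one]
      _ ≤ ε := le_of_lt htail
  by_contra hne
  have hpos : 0 < ‖c j₀‖ := norm_pos_iff.2 hne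
  exact absurd (habs (‖c j₀‖ / 2) (by linarith)) (by linarith)
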